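/- Let d ≥ 2, m ≥ 1, S > 0 and let R : Σ_m^{(d)} → ℤ^d satisfy ∑_{i=1}^d R_i(v) = S for all v, together with the tenability condition R_i(v) ≥ 0 for all v ≠ m·e_i and all i. If h(x) = ∑_{v ∈ Σ_m^{(d)}} (m choose v_1,...,v_d)(∏_i x_i^{v_i})(R(v) − S·x) vanishes identically on the simplex Σ^{(d)}, then m divides S and R(v) = (S/m)·v for all v ∈ Σ_m^{(d)}. -/

import Mathlib

open Finset

/-- The set `Σ_m^{(d)}` of vectors `v ∈ ℕ^d` with `∑ i, v i = m`. -/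
def sigmaVec (d m : ℕ) : Finset (Fin d → ℕ) :=
  (Fintype.piFinset fun _ : Fin d => Finset.range (m + 1)).filter (fun v => ∑ i, v i = m)

/-- The drift function `h` of a balanced multi-drawing Pólya urn. -/
noncomputable def urnDrift (d m : ℕ) (S : ℕ) (R : (Fin d → ℕ) → Fin d → ℤ)
    (x : Fin d → ℝ) : Fin d → ℝ :=
  fun j => ∑ v ∈ sigmaVec d m,
    (Nat.multinomial Finset.univ v : ℝ) * (∏ i, x i ^ v i) * ((R v j : ℝ) - (S : ℝ) * x j)

lemma mem_sigmaVec {d m : ℕ} {v : Fin d → ℕ} : v ∈ sigmaVec d m ↔ ∑ i, v i = m := by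
  simp only [sigmaVec, mem_filter, Fintype.mem_piFinset, mem_range, Nat.lt_succ_iff]
  constructor
  · exact fun h => h.2
  · intro h
    refine ⟨fun i => h ▸ ?_, h⟩
    exact Finset.single_le_sum (f := v) (fun _ _ => Nat.zero_le _) (mem_univ i)

lemma sigmaVec_eq {d m : ℕ} : sigmaVec d m = Finset.piAntidiag Finset.univ m := by
  ext v; simp [mem_sigmaVec, Finset.mem_piAntidiag]

lemma multinomial_thm {d m : ℕ} (y : Fin d → ℝ) :
    (∑ i, y i) ^ m = ∑ v ∈ sigmaVec d m, (Nat.multinomial Finset.univ v : ℝ) * ∏ i, y i ^ v i := by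
  rw [sigmaVec_eq, Finset.sum_pow_eq_sum_piAntidiag]

lemma base_inj {m : ℕ} : ∀ {d : ℕ} (v w : Fin d → ℕ), (∀ i, v i ≤ m) → (∀ i, w i ≤ m) →
    (∑ i, v i * (m+1)^(i:ℕ)) = (∑ i, w i * (m+1)^(i:ℕ)) → v = w := by
  intro d
  induction d with
  | zero => intro v w _ _ _; funext i; exact i.elim0
  | succ n ih =>
    intro v w hv hw hsum
    have expand : ∀ u : Fin (n+1) → ℕ, (∑ i, u i * (m+1)^(i:ℕ))
        = u 0 + (m+1) * ∑ i : Fin n, u i.succ * (m+1)^(i:ℕ) := by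
      intro u
      rw [Fin.sum_univ_succ]
      simp only [Fin.val_zero, pow_zero, mul_one, Fin.val_succ, pow_succ]
      rw [Finset.mul_sum]
      congr 1; apply Finset.sum_congr rfl; intros; ring
    rw [expand v, expand w] at hsum
    have h0 : v 0 = w 0 := by
      have := congrArg (· % (m+1)) hsum
      simpa [Nat.add_mul_mod_self_left, Nat.mod_eq_of_lt (Nat.lt_succ_of_le (hv 0)),
        Nat.mod_eq_of_lt (Nat.lt_succ_of_le (hw 0))] using this
    have htail : (∑ i : Fin n, v i.succ * (m+1)^(i:ℕ)) = ∑ i : Fin n, w i.succ * (m+1)^(i:ℕ) := by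
      rw [h0] at hsum
      have := Nat.add_left_cancel hsum
      exact Nat.eq_of_mul_eq_mul_left (Nat.succ_pos m) this
    have := ih (fun i => v i.succ) (fun i => w i.succ) (fun i => hv _) (fun i => hw _) htail
    funext i
    refine Fin.cases h0 (fun j => ?_) i
    exact congrFun this j

lemma mono_indep {d m : ℕ} (a : (Fin d → ℕ) → ℝ)
    (h : ∀ y : Fin d → ℝ, (∀ i, 0 < y i) → ∑ v ∈ sigmaVec d m, a v * ∏ i, y i ^ v i = 0) :
    ∀ v ∈ sigmaVec d m, a v = 0 := by
  set N : (Fin d → ℕ) → ℕ := fun v => ∑ i, v i * (m+1)^(i:ℕ) with hN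
  have ht : ∀ t : ℝ, 0 < t → ∑ v ∈ sigmaVec d m, a v * t ^ (N v) = 0 := by
    intro t ht
    have := h (fun i => t ^ ((m+1)^(i:ℕ))) (fun i => pow_pos ht _)
    rw [← this]
    refine Finset.sum_congr rfl fun v _ => ?_
    congr 1
    rw [hN, ← Finset.prod_pow_eq_pow_sum]
    exact Finset.prod_congr rfl fun i _ => by rw [← pow_mul, mul_comm]
  set p : Polynomial ℝ := ∑ v ∈ sigmaVec d m, Polynomial.C (a v) * Polynomial.X ^ (N v) with hp
  have hpz : p = 0 := by
    apply Polynomial.eq_zero_of_infinite_isRoot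
    apply Set.Infinite.mono (s := Set.Ioi (0:ℝ))
    · intro t htt
      simp only [Set.mem_setOf_eq, Polynomial.IsRoot, hp, Polynomial.eval_finset_sum,
        Polynomial.eval_mul, Polynomial.eval_C, Polynomial.eval_pow, Polynomial.eval_X]
      exact ht t htt
    · exact Set.Ioi_infinite 0
  intro v hv
  have hvle : ∀ i, v i ≤ m := by
    intro i
    have := mem_sigmaVec.1 hv
    exact this ▸ Finset.single_le_sum (f := v) (fun _ _ => Nat.zero_le _) (mem_univ i)
  have := congrArg (fun q => Polynomial.coeff q (N v)) hpz
  simp only [hp, Polynomial.finset_sum_coeff, Polynomial.coeff_C_mul, Polynomial.coeff_X_pow,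
    Polynomial.coeff_zero] at this
  rw [Finset.sum_eq_single v] at this
  · simpa using this
  · intro w hw hne
    have hwle : ∀ i, w i ≤ m := by
      intro i
      have h2 := mem_sigmaVec.1 hw
      exact h2 ▸ Finset.single_le_sum (f := w) (fun _ _ => Nat.zero_le _) (mem_univ i)
    rw [if_neg, mul_zero]
    intro hNe
    exact hne (base_inj w v hwle hvle hNe.symm)
  · intro hvv; exact absurd hv hvv

lemma multinomial_decr {d m : ℕ} (j : Fin d) (v : Fin d → ℕ) (hv : ∑ i, v i = m)
    (hj : 1 ≤ v j) :
    m * Nat.multinomial Finset.univ (fun i => v i - if i = j then 1 else 0)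
      = v j * Nat.multinomial Finset.univ v := by
  set w : Fin d → ℕ := fun i => v i - if i = j then 1 else 0 with hw
  have hvw : ∀ i, v i = w i + if i = j then 1 else 0 := by
    intro i; by_cases h : i = j
    · subst h; simp only [hw, eq_self_iff_true, if_true]; omega
    · simp [hw, h]
  have hsw : (∑ i, w i) + 1 = m := by
    rw [← hv]
    have : ∑ i, v i = (∑ i, w i) + ∑ i, (if i = j then 1 else 0) := by
      rw [← Finset.sum_add_distrib]; exact Finset.sum_congr rfl fun i _ => hvw i
    rw [this, Finset.sum_ite_eq' univ j (fun _ => 1), if_pos (mem_univ j)]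
  have hm1 : 0 < m := by omega
  have hprod : ∏ i, (v i).factorial = v j * ∏ i, (w i).factorial := by
    rw [← Finset.mul_prod_erase univ (fun i => (v i).factorial) (mem_univ j),
        ← Finset.mul_prod_erase univ (fun i => (w i).factorial) (mem_univ j)]
    have h1 : (v j).factorial = v j * (w j).factorial := by
      have : v j = w j + 1 := by rw [hvw j, if_pos rfl]
      rw [this, Nat.factorial_succ]
    have h2 : ∀ i ∈ univ.erase j, (v i).factorial = (w i).factorial := by
      intro i hi
      have : v i = w i := by rw [hvw i, if_neg (Finset.mem_erase.1 hi).1, add_zero]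
      rw [this]
    rw [Finset.prod_congr rfl h2, h1]; ring
  have spec_v := Nat.multinomial_spec Finset.univ v
  have spec_w := Nat.multinomial_spec Finset.univ w
  rw [hv] at spec_v
  have hsww : ∑ i, w i = m - 1 := by omega
  rw [hsww] at spec_w
  apply Nat.eq_of_mul_eq_mul_left (Finset.prod_pos fun i _ => (v i).factorial_pos)
  calc (∏ i, (v i).factorial) * (m * Nat.multinomial univ w)
      = m * (v j * ((∏ i, (w i).factorial) * Nat.multinomial univ w)) := by rw [hprod]; ring
    _ = v j * (m * (m-1).factorial) := by rw [spec_w]; ring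
    _ = v j * m.factorial := by rw [Nat.mul_factorial_pred hm1.ne']
    _ = (∏ i, (v i).factorial) * (v j * Nat.multinomial univ v) := by rw [← spec_v]; ring

theorem h_zero_implies_diagonal (d m S : ℕ) (hd : 2 ≤ d) (hm : 1 ≤ m) (hS : 0 < S)
    (R : (Fin d → ℕ) → Fin d → ℤ)
    (hbal : ∀ v ∈ sigmaVec d m, ∑ i, R v i = (S : ℤ))
    (hten : ∀ v ∈ sigmaVec d m, ∀ i : Fin d,
      v ≠ (fun j => if j = i then m else 0) → 0 ≤ R v i)
    (hzero : ∀ x : Fin d → ℝ, (∀ i, 0 ≤ x i) → (∀ i, x i ≤ 1) → (∑ i, x i = 1) →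
      ∀ j, urnDrift d m S R x j = 0) :
    m ∣ S ∧ ∀ v ∈ sigmaVec d m, ∀ i, R v i = ((S / m : ℕ) : ℤ) * (v i : ℤ) := by
  have key : ∀ j : Fin d, ∀ v ∈ sigmaVec d m, (m:ℤ) * R v j = (S:ℤ) * (v j : ℤ) := by
    intro j
    set C : (Fin d → ℕ) → ℝ := fun v => (Nat.multinomial Finset.univ v : ℝ) with hC
    set b : (Fin d → ℕ) → ℝ := fun v => if v j = 0 then 0 else
      (S:ℝ) * (Nat.multinomial Finset.univ (fun i => v i - if i = j then 1 else 0) : ℝ) with hb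
    -- Step A : homogenized identity on the positive orthant
    have hA : ∀ y : Fin d → ℝ, (∀ i, 0 < y i) →
        ∑ v ∈ sigmaVec d m, C v * (∏ i, y i ^ v i) * (R v j : ℝ)
          = (S:ℝ) * y j * (∑ i, y i) ^ (m-1) := by
      intro y hy
      set t : ℝ := ∑ i, y i with htdef
      have htpos : 0 < t := Finset.sum_pos (fun i _ => hy i) ⟨j, mem_univ j⟩
      have htne : t ≠ 0 := ne_of_gt htpos
      set x : Fin d → ℝ := fun i => y i / t with hx
      have hx0 : ∀ i, 0 ≤ x i := fun i => div_nonneg (hy i).le htpos.le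
      have hxsum : ∑ i, x i = 1 := by
        simp only [hx]; rw [← Finset.sum_div, ← htdef]; field_simp
      have hx1 : ∀ i, x i ≤ 1 := by
        intro i
        have : y i ≤ t := Finset.single_le_sum (f := y) (fun i _ => (hy i).le) (mem_univ i)
        simpa only [hx] using (div_le_one htpos).2 this
      have h0 := hzero x hx0 hx1 hxsum j
      unfold urnDrift at h0
      have hx_sum : ∑ v ∈ sigmaVec d m, C v * ∏ i, x i ^ v i = 1 := by
        rw [← multinomial_thm, hxsum, one_pow]
      have h1 : ∑ v ∈ sigmaVec d m, C v * (∏ i, x i ^ v i) * (R v j : ℝ) = (S:ℝ) * x j := by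
        have hsplit : ∑ v ∈ sigmaVec d m, C v * (∏ i, x i ^ v i) * ((R v j : ℝ) - (S:ℝ) * x j)
            = (∑ v ∈ sigmaVec d m, C v * (∏ i, x i ^ v i) * (R v j : ℝ))
              - (S:ℝ) * x j * ∑ v ∈ sigmaVec d m, C v * ∏ i, x i ^ v i := by
          rw [Finset.mul_sum, ← Finset.sum_sub_distrib]
          exact Finset.sum_congr rfl fun v _ => by ring
        rw [h0] at hsplit
        rw [hx_sum, mul_one] at hsplit
        linarith
      have hxy : ∀ v ∈ sigmaVec d m, ∏ i, x i ^ v i = (∏ i, y i ^ v i) / t ^ m := by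
        intro v hv
        simp only [hx, div_pow]
        rw [Finset.prod_div_distrib, Finset.prod_pow_eq_pow_sum, mem_sigmaVec.1 hv]
      have h2 : ∑ v ∈ sigmaVec d m, C v * (∏ i, y i ^ v i) * (R v j : ℝ)
          = t ^ m * ∑ v ∈ sigmaVec d m, C v * (∏ i, x i ^ v i) * (R v j : ℝ) := by
        rw [Finset.mul_sum]
        refine Finset.sum_congr rfl fun v hv => ?_
        rw [hxy v hv]
        field_simp
      rw [h2, h1]
      have : t ^ m = t * t ^ (m-1) := by
        conv_lhs => rw [show m = 1 + (m-1) by omega]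
        rw [pow_add, pow_one]
      rw [this]
      simp only [hx]
      field_simp
    -- Step B : expansion of the RHS
    have hB : ∀ y : Fin d → ℝ, (S:ℝ) * y j * (∑ i, y i) ^ (m-1)
        = ∑ v ∈ sigmaVec d m, b v * ∏ i, y i ^ v i := by
      intro y
      rw [multinomial_thm, Finset.mul_sum]
      have hfilter : ∑ v ∈ (sigmaVec d m).filter (fun v => v j ≠ 0), b v * ∏ i, y i ^ v i
          = ∑ v ∈ sigmaVec d m, b v * ∏ i, y i ^ v i := by
        apply Finset.sum_filter_of_ne
        intro v _ hne hvj
        apply hne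
        simp [hb, hvj]
      rw [← hfilter]
      apply Finset.sum_nbij' (i := fun w i => w i + if i = j then 1 else 0)
        (j := fun v i => v i - if i = j then 1 else 0)
      · intro w hw
        have hsw := mem_sigmaVec.1 hw
        have hsum : ∑ i, (w i + if i = j then 1 else 0) = m := by
          rw [Finset.sum_add_distrib, hsw, Finset.sum_ite_eq' univ j (fun _ => 1),
            if_pos (mem_univ j)]
          omega
        rw [Finset.mem_filter]
        refine ⟨mem_sigmaVec.2 hsum, ?_⟩
        simp
      · intro v hv
        rw [Finset.mem_filter] at hv
        obtain ⟨hv1, hv2⟩ := hv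
        have hsv := mem_sigmaVec.1 hv1
        apply mem_sigmaVec.2
        have : ∀ i, v i = (v i - if i = j then 1 else 0) + if i = j then 1 else 0 := by
          intro i; by_cases h : i = j
          · subst h; simp only [eq_self_iff_true, if_true]; omega
          · simp [h]
        have h2 : ∑ i, v i = (∑ i, (v i - if i = j then 1 else 0))
            + ∑ i, (if i = j then 1 else 0) := by
          rw [← Finset.sum_add_distrib]; exact Finset.sum_congr rfl fun i _ => this i
        rw [Finset.sum_ite_eq' univ j (fun _ => 1), if_pos (mem_univ j)] at h2
        omega
      · intro w _
        funext i; by_cases h : i = j <;> simp [h]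
      · intro v hv
        rw [Finset.mem_filter] at hv
        funext i; by_cases h : i = j
        · subst h; simp only [eq_self_iff_true, if_true]; omega
        · simp [h]
      · intro w hw
        have hsw := mem_sigmaVec.1 hw
        have hj1 : w j + (if j = j then 1 else 0) ≠ 0 := by simp
        have harg : (fun i => (w i + if i = j then 1 else 0) - if i = j then 1 else 0) = w := by
          funext i; by_cases h : i = j <;> simp [h]
        have hbw : b (fun i => w i + if i = j then 1 else 0) = (S:ℝ) * C w := by
          simp only [hb, harg]
          rw [if_neg (by simp)]
        have hprod : ∏ i, y i ^ (w i + if i = j then 1 else 0)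
            = (∏ i, y i ^ w i) * y j := by
          rw [show (∏ i, y i ^ (w i + if i = j then 1 else 0))
              = ∏ i, (y i ^ w i * y i ^ (if i = j then 1 else 0)) from
              Finset.prod_congr rfl fun i _ => by rw [← pow_add]]
          rw [Finset.prod_mul_distrib]
          congr 1
          rw [show (∏ i, y i ^ (if i = j then 1 else 0))
            = ∏ i, (if i = j then y i else 1) from
            Finset.prod_congr rfl fun i _ => by by_cases h : i = j <;> simp [h]]
          rw [Finset.prod_ite_eq' univ j (fun i => y i), if_pos (mem_univ j)]
        rw [hbw, hprod]
        ring
    -- combine A and B via monomial independence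
    have hcomb : ∀ v ∈ sigmaVec d m, C v * (R v j : ℝ) - b v = 0 := by
      apply mono_indep
      intro y hy
      have hAB := (hA y hy).trans (hB y)
      calc ∑ v ∈ sigmaVec d m, (C v * (R v j : ℝ) - b v) * ∏ i, y i ^ v i
          = (∑ v ∈ sigmaVec d m, C v * (∏ i, y i ^ v i) * (R v j : ℝ))
            - ∑ v ∈ sigmaVec d m, b v * ∏ i, y i ^ v i := by
            rw [← Finset.sum_sub_distrib]
            exact Finset.sum_congr rfl fun v _ => by ring
        _ = 0 := by rw [hAB, sub_self]
    intro v hv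
    have h3 := hcomb v hv
    have hCpos : (0:ℝ) < C v := by
      simp only [hC]
      exact_mod_cast Nat.multinomial_pos _ _
    have hreal : (m:ℝ) * (R v j : ℝ) = (S:ℝ) * (v j : ℝ) := by
      by_cases hvj : v j = 0
      · have hbv : b v = 0 := by simp [hb, hvj]
        rw [hbv, sub_zero] at h3
        have : (R v j : ℝ) = 0 := by
          rcases mul_eq_zero.1 h3 with h | h
          · exact absurd h (ne_of_gt hCpos)
          · exact h
        rw [this, hvj]; simp
      · have hbv : b v = (S:ℝ) *
            (Nat.multinomial Finset.univ (fun i => v i - if i = j then 1 else 0) : ℝ) := by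
          simp only [hb]
          rw [if_neg hvj]
        have h4 : C v * (R v j : ℝ) = (S:ℝ) *
            (Nat.multinomial Finset.univ (fun i => v i - if i = j then 1 else 0) : ℝ) := by
          rw [← hbv]; linarith
        have hdec := multinomial_decr j v (mem_sigmaVec.1 hv) (Nat.one_le_iff_ne_zero.2 hvj)
        have hdecR : (m:ℝ) * (Nat.multinomial Finset.univ
            (fun i => v i - if i = j then 1 else 0) : ℝ) = (v j : ℝ) * C v := by
          simp only [hC]
          exact_mod_cast congrArg (Nat.cast : ℕ → ℝ) hdec
        apply mul_left_cancel₀ (ne_of_gt hCpos)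
        calc C v * ((m:ℝ) * (R v j : ℝ)) = (m:ℝ) * (C v * (R v j : ℝ)) := by ring
          _ = (S:ℝ) * ((m:ℝ) * (Nat.multinomial Finset.univ
              (fun i => v i - if i = j then 1 else 0) : ℝ)) := by rw [h4]; ring
          _ = (S:ℝ) * ((v j : ℝ) * C v) := by rw [hdecR]
          _ = C v * ((S:ℝ) * (v j : ℝ)) := by ring
    exact_mod_cast hreal
  -- use key to conclude
  have hdvd : m ∣ S := by
    set i0 : Fin d := ⟨0, by omega⟩ with hi0
    set i1 : Fin d := ⟨1, by omega⟩ with hi1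
    have hne : i0 ≠ i1 := by
      intro h
      have := congrArg Fin.val h
      simp [hi0, hi1] at this
    set v1 : Fin d → ℕ := fun i => if i = i0 then 1 else if i = i1 then m - 1 else 0 with hv1def
    have hv1 : v1 ∈ sigmaVec d m := by
      apply mem_sigmaVec.2
      have hpt : ∀ i, v1 i = (if i = i0 then 1 else 0) + (if i = i1 then m-1 else 0) := by
        intro i
        by_cases h : i = i0
        · subst h
          have : ¬ (i0 = i1) := hne
          simp [hv1def, this]
        · have hne' : ¬ (i1 = i0) := fun h'' => hne h''.symm
          by_cases h' : i = i1 <;> simp [hv1def, h, h', hne']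
      rw [Finset.sum_congr rfl fun i _ => hpt i, Finset.sum_add_distrib,
        Finset.sum_ite_eq' univ i0 (fun _ => 1), Finset.sum_ite_eq' univ i1 (fun _ => m-1),
        if_pos (mem_univ i0), if_pos (mem_univ i1)]
      omega
    have hk := key i0 v1 hv1
    have hv10 : v1 i0 = 1 := by simp [hv1def]
    rw [hv10] at hk
    have : (m:ℤ) ∣ (S:ℤ) := ⟨R v1 i0, by omega⟩
    exact_mod_cast this
  refine ⟨hdvd, ?_⟩
  intro v hv i
  have hk2 := key i v hv
  have hSm : (S:ℤ) = (m:ℤ) * ((S/m : ℕ) : ℤ) := by exact_mod_cast (Nat.mul_div_cancel' hdvd).symm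
  have hmul : (m:ℤ) * R v i = (m:ℤ) * (((S/m:ℕ):ℤ) * (v i : ℤ)) := by rw [hk2, hSm]; ring
  exact mul_left_cancel₀ (by exact_mod_cast (by omega : m ≠ 0)) hmul
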